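/- In every finite mean-payoff co-Büchi game (priorities contained in {1,2}), Player 1 has a memoryless optimal strategy from every state. -/

import Mathlib

open Filter

/-- A (weighted) game graph with priorities: states are partitioned between
Player 1 (`isP1`) and Player 2, `E` is the edge relation, `w` the edge weights
and `col` the priority function. -/
structure Game (V : Type) where
  isP1 : V → Prop
  E : V → V → Prop
  w : V → V → ℝ
  col : V → ℕ

variable {V : Type}

/-- An infinite play (infinite path in the graph). -/
def IsPlay (G : Game V) (ρ : ℕ → V) : Prop := ∀ n, G.E (ρ n) (ρ (n + 1))

/-- The set of states occurring infinitely often. -/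
def InfOcc (ρ : ℕ → V) : Set V := {v | ∃ᶠ n in atTop, ρ n = v}

/-- The average weight of the first `n` edges of `ρ`. -/
noncomputable def avgW (G : Game V) (ρ : ℕ → V) (n : ℕ) : ℝ :=
  (∑ i ∈ Finset.range n, G.w (ρ i) (ρ (i + 1))) / n

/-- A play is parity-winning if the minimal priority seen infinitely often is even. -/
def ParityWin (G : Game V) (ρ : ℕ → V) : Prop := Even (sInf (G.col '' InfOcc ρ))

/-- The payoff of a play: the liminf of the average weights if the play is
parity-winning, and `-∞` otherwise. -/
noncomputable def payoff (G : Game V) (ρ : ℕ → V) : EReal :=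
  haveI := Classical.dec (ParityWin G ρ)
  if ParityWin G ρ then Filter.liminf (fun n => ((avgW G ρ n : ℝ) : EReal)) atTop else ⊥

/-- A strategy of Player 1: given the past history and the current state
(controlled by Player 1), choose a successor. -/
structure Strat1 (G : Game V) where
  f : List V → V → V
  valid : ∀ h c, G.isP1 c → G.E c (f h c)

/-- A strategy of Player 2. -/
structure Strat2 (G : Game V) where
  f : List V → V → V
  valid : ∀ h c, ¬ G.isP1 c → G.E c (f h c)

def Memoryless1 {G : Game V} (σ : Strat1 G) : Prop := ∀ h h' c, σ.f h c = σ.f h' c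
def Memoryless2 {G : Game V} (τ : Strat2 G) : Prop := ∀ h h' c, τ.f h c = τ.f h' c

/-- A play is consistent with a strategy of Player 1. -/
def Consistent1 (G : Game V) (σ : Strat1 G) (ρ : ℕ → V) : Prop :=
  ∀ n, G.isP1 (ρ n) → ρ (n + 1) = σ.f (List.ofFn fun i : Fin n => ρ i) (ρ n)

/-- A play is consistent with a strategy of Player 2. -/
def Consistent2 (G : Game V) (τ : Strat2 G) (ρ : ℕ → V) : Prop :=
  ∀ n, ¬ G.isP1 (ρ n) → ρ (n + 1) = τ.f (List.ofFn fun i : Fin n => ρ i) (ρ n)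

/-- The value of a Player 1 strategy from `q₀`: the infimum of the payoffs of
consistent plays from `q₀`. -/
noncomputable def val1 (G : Game V) (σ : Strat1 G) (q₀ : V) : EReal :=
  ⨅ ρ : {ρ : ℕ → V // IsPlay G ρ ∧ ρ 0 = q₀ ∧ Consistent1 G σ ρ}, payoff G ρ.val

/-- The value of a Player 2 strategy from `q₀`. -/
noncomputable def val2 (G : Game V) (τ : Strat2 G) (q₀ : V) : EReal :=
  ⨆ ρ : {ρ : ℕ → V // IsPlay G ρ ∧ ρ 0 = q₀ ∧ Consistent2 G τ ρ}, payoff G ρ.val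

/-- The lower value of a state. -/
noncomputable def lowVal (G : Game V) (q₀ : V) : EReal := ⨆ σ : Strat1 G, val1 G σ q₀

/-- The upper value of a state. -/
noncomputable def upVal (G : Game V) (q₀ : V) : EReal := ⨅ τ : Strat2 G, val2 G τ q₀

/-- The Player 1 attractor of a set `S`: the states from which Player 1 can
force a visit to `S`. -/
inductive Attr1 (G : Game V) (S : Set V) : V → Prop
  | base {v} : v ∈ S → Attr1 G S v
  | p1 {v u} : G.isP1 v → G.E v u → Attr1 G S u → Attr1 G S v
  | p2 {v} : ¬ G.isP1 v → (∃ u, G.E v u) → (∀ u, G.E v u → Attr1 G S u) → Attr1 G S v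

/-- The Player 2 attractor of a set `S`. -/
inductive Attr2 (G : Game V) (S : Set V) : V → Prop
  | base {v} : v ∈ S → Attr2 G S v
  | p2 {v u} : ¬ G.isP1 v → G.E v u → Attr2 G S u → Attr2 G S v
  | p1 {v} : G.isP1 v → (∃ u, G.E v u) → (∀ u, G.E v u → Attr2 G S u) → Attr2 G S v

/-- The game restricted to a subarena `T`. -/
def Game.restrict (G : Game V) (T : Set V) : Game T where
  isP1 v := G.isP1 v.val
  E a b := G.E a.val b.val
  w a b := G.w a.val b.val
  col v := G.col v.val

namespace MPCB
open Filter Set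

set_option linter.unusedSectionVars false

noncomputable section
open scoped Classical

variable {V : Type} [Fintype V]

/-! ### Analytic preliminaries -/

/-- Partial sums of weights along a play. -/
def S (G : Game V) (ρ : ℕ → V) (n : ℕ) : ℝ := ∑ i ∈ Finset.range n, G.w (ρ i) (ρ (i + 1))

lemma avgW_eq (G : Game V) (ρ : ℕ → V) (n : ℕ) : avgW G ρ n = S G ρ n / n := rfl

lemma exists_infOcc (ρ : ℕ → V) : ∃ v, v ∈ InfOcc ρ := by
  obtain ⟨v, hv⟩ := Finite.exists_infinite_fiber ρ
  refine ⟨v, Nat.frequently_atTop_iff_infinite.mpr ?_⟩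
  rw [← Set.infinite_coe_iff]
  exact hv

lemma exists_infOcc_of_infinite {ρ : ℕ → V} {P : V → Prop}
    (h : {t | P (ρ t)}.Infinite) : ∃ v, P v ∧ v ∈ InfOcc ρ := by
  have hinst : Infinite {t // P (ρ t)} := h.to_subtype
  obtain ⟨v, hv⟩ := Finite.exists_infinite_fiber (fun t : {t // P (ρ t)} => ρ t.1)
  have h1 : ((fun t : {t // P (ρ t)} => ρ t.1) ⁻¹' {v}).Infinite := Set.infinite_coe_iff.mp hv
  have h2 : ((Subtype.val : {t // P (ρ t)} → ℕ) ''
      ((fun t : {t // P (ρ t)} => ρ t.1) ⁻¹' {v})).Infinite :=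
    h1.image (Subtype.val_injective.injOn)
  have h3 : ((Subtype.val : {t // P (ρ t)} → ℕ) ''
      ((fun t : {t // P (ρ t)} => ρ t.1) ⁻¹' {v})) ⊆ {n | ρ n = v} := by
    rintro n ⟨⟨t, ht⟩, hmem, rfl⟩
    exact hmem
  obtain ⟨⟨t0, hP⟩, hmem0⟩ := h1.nonempty
  have hPv : P v := by
    have : ρ t0 = v := hmem0
    rwa [this] at hP
  exact ⟨v, hPv, Nat.frequently_atTop_iff_infinite.mpr (h2.mono h3)⟩

lemma infOcc_subset {ρ : ℕ → V} {X : Set V} (T : ℕ) (h : ∀ n, T ≤ n → ρ n ∈ X) :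
    InfOcc ρ ⊆ X := by
  intro v hv
  obtain ⟨n, he, hn⟩ := (hv.and_eventually (eventually_ge_atTop T)).exists
  exact he ▸ h n hn

lemma parityWin_of (G : Game V) (hcol : ∀ v, G.col v = 1 ∨ G.col v = 2) {ρ : ℕ → V}
    (h : ∀ v ∈ InfOcc ρ, G.col v = 2) : ParityWin G ρ := by
  obtain ⟨v, hv⟩ := exists_infOcc ρ
  have himg : G.col '' InfOcc ρ = {2} := by
    apply Set.eq_singleton_iff_nonempty_unique_mem.mpr
    refine ⟨⟨_, Set.mem_image_of_mem _ hv⟩, ?_⟩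
    rintro x ⟨u, hu, rfl⟩; exact h u hu
  unfold ParityWin
  rw [himg, csInf_singleton]
  decide

lemma not_parityWin (G : Game V) (hcol : ∀ v, G.col v = 1 ∨ G.col v = 2) {ρ : ℕ → V} {v : V}
    (hv : v ∈ InfOcc ρ) (h1 : G.col v = 1) : ¬ ParityWin G ρ := by
  have h1m : (1 : ℕ) ∈ G.col '' InfOcc ρ := ⟨v, hv, h1⟩
  have hle : sInf (G.col '' InfOcc ρ) ≤ 1 := Nat.sInf_le h1m
  have hmem : sInf (G.col '' InfOcc ρ) ∈ G.col '' InfOcc ρ := Nat.sInf_mem ⟨_, h1m⟩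
  obtain ⟨u, _, hu⟩ := hmem
  have : sInf (G.col '' InfOcc ρ) = 1 := by
    rcases hcol u with h' | h'
    · omega
    · omega
  unfold ParityWin
  rw [this]
  decide

lemma payoff_eq_liminf (G : Game V) {ρ : ℕ → V} (hp : ParityWin G ρ) :
    payoff G ρ = Filter.liminf (fun n => ((avgW G ρ n : ℝ) : EReal)) atTop := by
  simp only [payoff]
  rw [if_pos hp]

lemma payoff_eq_bot (G : Game V) {ρ : ℕ → V} (hp : ¬ ParityWin G ρ) : payoff G ρ = ⊥ := by
  simp only [payoff]
  rw [if_neg hp]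

/-- payoff lower bound from a (tail) linear lower bound on the partial sums. -/
lemma payoff_ge_of_tail (G : Game V) (hcol : ∀ v, G.col v = 1 ∨ G.col v = 2)
    {ρ : ℕ → V} {c K : ℝ} {T : ℕ} {X : Set V}
    (hX2 : ∀ v ∈ X, G.col v = 2) (hmem : ∀ n, T ≤ n → ρ n ∈ X)
    (hS : ∀ n, T ≤ n → c * ((n : ℝ) - T) - K ≤ S G ρ n - S G ρ T) :
    (c : EReal) ≤ payoff G ρ := by
  have hpw : ParityWin G ρ := parityWin_of G hcol fun v hv => hX2 v (infOcc_subset T hmem hv)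
  rw [payoff_eq_liminf G hpw]
  set L := Filter.liminf (fun n => ((avgW G ρ n : ℝ) : EReal)) atTop with hL
  have key : ∀ ε : ℝ, 0 < ε → ((c - ε : ℝ) : EReal) ≤ L := by
    intro ε hε
    refine le_liminf_of_le (by isBoundedDefault) ?_
    set C : ℝ := S G ρ T - c * T - K with hC
    obtain ⟨N, hN⟩ := exists_nat_gt (max (|C| / ε) T)
    filter_upwards [eventually_ge_atTop (N + 1)] with n hn
    have hNn : (N : ℝ) < n := by exact_mod_cast Nat.lt_of_lt_of_le (Nat.lt_succ_self N) hn
    have hTn : (T : ℝ) ≤ n := le_trans (le_trans (le_max_right _ _) hN.le) hNn.le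
    have hTn' : T ≤ n := by exact_mod_cast hTn
    have hn0 : (0:ℝ) < n := lt_of_le_of_lt (Nat.cast_nonneg N) hNn
    have hSn := hS n hTn'
    have h1 : c * ((n : ℝ) - T) - K ≤ S G ρ n - S G ρ T := hSn
    have h2 : |C| < ε * n := by
      have h2' : |C| / ε < n := lt_of_le_of_lt (le_trans (le_max_left _ _) hN.le) hNn
      rw [div_lt_iff₀ hε] at h2'
      linarith
    rw [EReal.coe_le_coe_iff, avgW_eq, le_div_iff₀ hn0]
    have h3 : -|C| ≤ C := neg_abs_le C
    have h4 : C ≤ |C| := le_abs_self C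
    simp only [hC] at h3 h4
    nlinarith
  by_contra hlt
  push_neg at hlt
  obtain ⟨x, hLx, hxc⟩ := EReal.exists_between_coe_real hlt
  have hxc' : x < c := by exact_mod_cast hxc
  have := key (c - x) (by linarith)
  rw [show c - (c - x) = x by ring] at this
  exact absurd (lt_of_le_of_lt this hLx) (lt_irrefl _)

/-- payoff upper bound from frequently small partial sums. -/
lemma payoff_le_of_freq (G : Game V) {ρ : ℕ → V} {c : ℝ}
    (h : ∀ N : ℕ, ∃ n, N ≤ n ∧ 1 ≤ n ∧ S G ρ n ≤ c * n) : payoff G ρ ≤ (c : EReal) := by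
  by_cases hpw : ParityWin G ρ
  · rw [payoff_eq_liminf G hpw]
    refine liminf_le_of_frequently_le' ?_
    rw [frequently_atTop]
    intro N
    obtain ⟨n, hNn, hn1, hS⟩ := h N
    refine ⟨n, hNn, ?_⟩
    rw [EReal.coe_le_coe_iff, avgW_eq]
    rw [div_le_iff₀ (by positivity : (0:ℝ) < n)]
    linarith [hS]
  · rw [payoff_eq_bot G hpw]; exact bot_le

/-! ### Values -/

lemma val1_ge {G : Game V} {σ : Strat1 G} {q₀ : V} {c : EReal}
    (h : ∀ ρ : ℕ → V, IsPlay G ρ → ρ 0 = q₀ → Consistent1 G σ ρ → c ≤ payoff G ρ) :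
    c ≤ val1 G σ q₀ := le_iInf fun ρ => h ρ.1 ρ.2.1 ρ.2.2.1 ρ.2.2.2

lemma val1_le {G : Game V} {σ : Strat1 G} {q₀ : V} {ρ : ℕ → V}
    (h1 : IsPlay G ρ) (h2 : ρ 0 = q₀) (h3 : Consistent1 G σ ρ) :
    val1 G σ q₀ ≤ payoff G ρ := by
  unfold val1
  exact iInf_le (fun ρ : {ρ : ℕ → V // IsPlay G ρ ∧ ρ 0 = q₀ ∧ Consistent1 G σ ρ} =>
    payoff G ρ.val) ⟨ρ, h1, h2, h3⟩

/-! ### Memoryless strategies -/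

/-- Memoryless choice functions. -/
def MLC (G : Game V) : Type := {f : V → V // ∀ v, G.isP1 v → G.E v (f v)}

instance (G : Game V) : Finite (MLC G) := by unfold MLC; infer_instance

def MLC.toStrat {G : Game V} (g : MLC G) : Strat1 G :=
  ⟨fun _ v => g.1 v, fun _ v hv => g.2 v hv⟩

lemma MLC.memoryless {G : Game V} (g : MLC G) : Memoryless1 g.toStrat :=
  fun _ _ _ => rfl

lemma MLC.nonempty (G : Game V) (hsucc : ∀ v : V, ∃ u, G.E v u) : Nonempty (MLC G) :=
  ⟨⟨fun v => Classical.choose (hsucc v), fun v _ => Classical.choose_spec (hsucc v)⟩⟩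

/-! ### The configuration attractor for Player 2 (energy argument) -/

section Core

variable (G : Game V) (c : ℝ)

/-- Player-2 attractor on configurations (state, accumulated `w - c` sum), relative to an
    already-won region `W` of Player 1.  From a configuration in `AttrC W B v s`, Player 2
    can (staying outside `W`) force reaching a priority-1 state or a configuration with
    accumulated sum `≤ -B`. -/
inductive AttrC (W : Set V) (B : ℝ) : V → ℝ → Prop
  | base {v s} : (G.col v = 1 ∨ s ≤ -B) → AttrC W B v s
  | p2 {v u s} : v ∉ W → ¬ G.isP1 v → G.E v u → u ∉ W →
      AttrC W B u (s + (G.w v u - c)) → AttrC W B v s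
  | p1 {v s} : v ∉ W → G.isP1 v →
      (∀ u, G.E v u → AttrC W B u (s + (G.w v u - c))) → AttrC W B v s

lemma AttrC.translate {W : Set V} {B v s} (h : AttrC G c W B v s) (t : ℝ) :
    AttrC G c W (B + t) v (s - t) := by
  induction h with
  | base h =>
    rcases h with h | h
    · exact AttrC.base (Or.inl h)
    · exact AttrC.base (Or.inr (by linarith))
  | @p2 v' u' s' hW h1 he huW _ ih =>
    refine AttrC.p2 hW h1 he huW ?_
    have heq : s' - t + (G.w v' u' - c) = s' + (G.w v' u' - c) - t := by ring
    rw [heq]; exact ih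
  | @p1 v' s' hW h1 _ ih =>
    refine AttrC.p1 hW h1 fun u hu => ?_
    have heq : s' - t + (G.w v' u - c) = s' + (G.w v' u - c) - t := by ring
    rw [heq]; exact ih u hu

lemma AttrC.shift0 {W : Set V} {B v s} (h : ¬ AttrC G c W (B + s) v 0) :
    ¬ AttrC G c W B v s := fun hc => h (by simpa using hc.translate G c s)

lemma AttrC.anti {W : Set V} {B B' v s} (h : AttrC G c W B v s) (hB : B' ≤ B) :
    AttrC G c W B' v s := by
  induction h with
  | base h =>
    rcases h with h | h
    · exact AttrC.base (Or.inl h)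
    · exact AttrC.base (Or.inr (by linarith))
  | p2 hW h1 he huW _ ih => exact AttrC.p2 hW h1 he huW ih
  | p1 hW h1 _ ih => exact AttrC.p1 hW h1 fun u hu => ih u hu

lemma AttrC.congr' {W : Set V} {B B' v s s'} (h : AttrC G c W B v s) (hB : B' = B)
    (hs : s' = s) : AttrC G c W B' v s' := by
  subst hB; subst hs; exact h

lemma AttrC.of_nonpos {W : Set V} {B v} (hB : B ≤ 0) : AttrC G c W B v 0 :=
  AttrC.base (Or.inr (by linarith))

/-- The states (outside `W`) where Player 1 locally wins the energy-co-Büchi game. -/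
def Xset (W : Set V) : Set V := {v | v ∉ W ∧ ∃ B, ¬ AttrC G c W B v 0}

/-- The potential on `Xset`. -/
def phi (W : Set V) (v : V) : ℝ := sInf {B | ¬ AttrC G c W B v 0}

lemma phi_nonneg (W : Set V) (v : V) : 0 ≤ phi G c W v := by
  apply Real.sInf_nonneg
  intro B hB
  by_contra h
  push_neg at h
  exact hB (AttrC.of_nonpos G c h.le)

lemma bddBelow_phiSet (W : Set V) (v : V) : BddBelow {B | ¬ AttrC G c W B v 0} := by
  refine ⟨0, fun B hB => ?_⟩
  by_contra h
  push_neg at h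
  exact hB (AttrC.of_nonpos G c h.le)

lemma notAttrC_of_phi_lt {W : Set V} {v : V} (hv : v ∈ Xset G c W) {B : ℝ}
    (h : phi G c W v < B) : ¬ AttrC G c W B v 0 := by
  intro hA
  obtain ⟨-, B₀, hB₀⟩ := hv
  have hsub : B ≤ phi G c W v := by
    apply le_csInf ⟨B₀, hB₀⟩
    intro b hb
    by_contra hlt
    push_neg at hlt
    exact hb (hA.anti G c hlt.le)
  exact absurd (lt_of_le_of_lt hsub h) (lt_irrefl _)

lemma phi_le_of_notAttrC {W : Set V} {v : V} {B : ℝ} (h : ¬ AttrC G c W B v 0) :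
    phi G c W v ≤ B := csInf_le (bddBelow_phiSet G c W v) h

lemma Xset_col2 (hcol : ∀ v, G.col v = 1 ∨ G.col v = 2) {W : Set V} {v : V}
    (hv : v ∈ Xset G c W) : G.col v = 2 := by
  rcases hcol v with h | h
  · obtain ⟨-, B, hB⟩ := hv
    exact absurd (AttrC.base (Or.inl h)) hB
  · exact h

lemma Xset_notW {W : Set V} {v : V} (hv : v ∈ Xset G c W) : v ∉ W := hv.1

lemma Xset_p1_step {W : Set V} {v : V} (hv : v ∈ Xset G c W) (h1 : G.isP1 v) :
    ∃ u, G.E v u ∧ (u ∈ W ∨ (u ∈ Xset G c W ∧ phi G c W u + (c - G.w v u) ≤ phi G c W v)) := by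
  have hvW := hv.1
  have step : ∀ k : ℕ, ∃ u, G.E v u ∧
      ¬ AttrC G c W (phi G c W v + 1/(k+1)) u (0 + (G.w v u - c)) := by
    intro k
    have hne : ¬ AttrC G c W (phi G c W v + 1/(k+1)) v 0 :=
      notAttrC_of_phi_lt G c hv
        (by linarith [show (0:ℝ) < 1/((k:ℝ)+1) by positivity])
    by_contra hcon
    push_neg at hcon
    exact hne (AttrC.p1 hvW h1 hcon)
  set f : ℕ → V := fun k => Classical.choose (step k) with hf
  have hsp : ∀ k : ℕ, G.E v (f k) ∧
      ¬ AttrC G c W (phi G c W v + 1/(k+1)) (f k) (0 + (G.w v (f k) - c)) :=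
    fun k => Classical.choose_spec (step k)
  obtain ⟨u, hu⟩ := Finite.exists_infinite_fiber f
  have hfreq : ∀ N : ℕ, ∃ k, N ≤ k ∧ f k = u := by
    have hinf : {k | f k = u}.Infinite := Set.infinite_coe_iff.mp hu
    have hfr := Nat.frequently_atTop_iff_infinite.mpr hinf
    intro N
    obtain ⟨k, hk1, hk2⟩ := (hfr.and_eventually (eventually_ge_atTop N)).exists
    exact ⟨k, hk2, hk1⟩
  obtain ⟨k₀, -, hk₀⟩ := hfreq 0
  have hEu : G.E v u := hk₀ ▸ (hsp k₀).1
  by_cases huW : u ∈ W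
  · exact ⟨u, hEu, Or.inl huW⟩
  · refine ⟨u, hEu, Or.inr ?_⟩
    have key : ∀ k : ℕ, f k = u →
        ¬ AttrC G c W (phi G c W v + 1/(k+1) + (G.w v u - c)) u 0 := by
      intro k hk
      have h2 := (hsp k).2
      rw [hk] at h2
      intro hA
      apply h2
      rw [zero_add]
      exact (hA.translate G c (-(G.w v u - c))).congr' G c (by ring) (by ring)
    have hmemX : u ∈ Xset G c W := ⟨huW, _, key k₀ hk₀⟩
    refine ⟨hmemX, ?_⟩
    have hb : ∀ ε : ℝ, 0 < ε → phi G c W u + (c - G.w v u) ≤ phi G c W v + ε := by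
      intro ε hε
      obtain ⟨N, hN⟩ := exists_nat_gt (1/ε)
      obtain ⟨k, hkN, hk⟩ := hfreq N
      have hsmall : 1/((k:ℝ)+1) ≤ ε := by
        rw [div_le_iff₀ (by positivity)]
        have h1 : 1/ε < (k:ℝ)+1 := lt_of_lt_of_le hN (by exact_mod_cast Nat.le_succ_of_le hkN)
        rw [div_lt_iff₀ hε] at h1
        linarith
      have := phi_le_of_notAttrC G c (key k hk)
      linarith
    by_contra hcon
    push_neg at hcon
    obtain ⟨ε, hε, hlt⟩ : ∃ ε : ℝ, 0 < ε ∧ phi G c W v + ε < phi G c W u + (c - G.w v u) :=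
      ⟨(phi G c W u + (c - G.w v u) - phi G c W v)/2, by linarith, by linarith⟩
    exact absurd (hb ε hε) (not_le.mpr hlt)

lemma Xset_p2_step {W : Set V} {v : V} (hv : v ∈ Xset G c W) (h1 : ¬ G.isP1 v) :
    ∀ u, G.E v u → u ∈ W ∨ (u ∈ Xset G c W ∧ phi G c W u + (c - G.w v u) ≤ phi G c W v) := by
  intro u hEu
  by_cases huW : u ∈ W
  · exact Or.inl huW
  · refine Or.inr ?_
    have key : ∀ ε : ℝ, 0 < ε →
        ¬ AttrC G c W (phi G c W v + ε + (G.w v u - c)) u 0 := by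
      intro ε hε hA
      have hne : ¬ AttrC G c W (phi G c W v + ε) v 0 :=
        notAttrC_of_phi_lt G c hv (by linarith)
      apply hne
      refine AttrC.p2 hv.1 h1 hEu huW ?_
      rw [zero_add]
      exact (hA.translate G c (-(G.w v u - c))).congr' G c (by ring) (by ring)
    refine ⟨⟨huW, _, key 1 one_pos⟩, ?_⟩
    have hb : ∀ ε : ℝ, 0 < ε → phi G c W u + (c - G.w v u) ≤ phi G c W v + ε := by
      intro ε hε
      have := phi_le_of_notAttrC G c (key ε hε)
      linarith
    by_contra hcon
    push_neg at hcon
    obtain ⟨ε, hε, hlt⟩ : ∃ ε : ℝ, 0 < ε ∧ phi G c W v + ε < phi G c W u + (c - G.w v u) :=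
      ⟨(phi G c W u + (c - G.w v u) - phi G c W v)/2, by linarith, by linarith⟩
    exact absurd (hb ε hε) (not_le.mpr hlt)

/-! ### Attractor stages -/

def attrStage (T : Set V) : ℕ → Set V
  | 0 => T
  | n + 1 => attrStage T n ∪
      {v | G.isP1 v ∧ ∃ u, G.E v u ∧ u ∈ attrStage T n} ∪
      {v | ¬ G.isP1 v ∧ (∃ u, G.E v u) ∧ ∀ u, G.E v u → u ∈ attrStage T n}

lemma attrStage_mono (T : Set V) : Monotone (attrStage G T) := by
  apply monotone_nat_of_le_succ
  intro n
  exact le_trans (le_sup_left : attrStage G T n ≤ _) (le_sup_left)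

lemma attr_eq_iUnion (T : Set V) : Attr1 G T = ⋃ n, attrStage G T n := by
  apply Set.Subset.antisymm
  · intro v hv
    induction hv with
    | base h => exact Set.mem_iUnion.mpr ⟨0, h⟩
    | @p1 v u h1 he _ ih =>
      obtain ⟨n, hn⟩ := Set.mem_iUnion.mp ih
      exact Set.mem_iUnion.mpr ⟨n + 1, Or.inl (Or.inr ⟨h1, u, he, hn⟩)⟩
    | @p2 v h1 hex hall ih =>
      classical
      set F : V → ℕ := fun u => if h : ∃ n, u ∈ attrStage G T n then Nat.find h else 0 with hF
      set N : ℕ := Finset.univ.sup F with hN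
      refine Set.mem_iUnion.mpr ⟨N + 1, Or.inr ⟨h1, hex, fun u hu => ?_⟩⟩
      have hex2 : ∃ n, u ∈ attrStage G T n := Set.mem_iUnion.mp (ih u hu)
      have h1' : u ∈ attrStage G T (F u) := by
        simp only [hF, dif_pos hex2]
        exact Nat.find_spec hex2
      exact attrStage_mono G T (Finset.le_sup (Finset.mem_univ u)) h1'
  · refine Set.iUnion_subset_iff.mpr ?_
    intro n
    induction n with
    | zero => exact fun v hv => Attr1.base hv
    | succ n ih =>
      rintro v (⟨hv | ⟨h1, u, he, hu⟩⟩ | ⟨h1, hex, hall⟩)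
      · exact ih hv
      · exact Attr1.p1 h1 he (ih hu)
      · exact Attr1.p2 h1 hex fun u hu => ih (hall u hu)

/-! ### The chain of winning regions -/

def Wop (W : Set V) : Set V := Attr1 G (Xset G c W ∪ W)

def Wn : ℕ → Set V
  | 0 => ∅
  | n + 1 => Wop G c (Wn n)

lemma Wn_succ_supset (n : ℕ) : Wn G c n ⊆ Wn G c (n + 1) :=
  fun _ hv => Attr1.base (Set.mem_union_right _ hv)

lemma Wn_mono : Monotone (Wn G c) := monotone_nat_of_le_succ (Wn_succ_supset G c)

lemma Wn_exists_stable : ∃ N, Wn G c (N + 1) = Wn G c N := by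
  by_contra h
  push_neg at h
  have key : ∀ n, n ≤ (Wn G c n).ncard := by
    intro n
    induction n with
    | zero => exact Nat.zero_le _
    | succ n ih =>
      have hss : Wn G c n ⊂ Wn G c (n + 1) :=
        ssubset_of_subset_of_ne (Wn_succ_supset G c n) (fun he => h n he.symm)
      have := Set.ncard_lt_ncard hss (Set.toFinite _)
      omega
  have h1 := key (Fintype.card V + 1)
  have h2 : (Wn G c (Fintype.card V + 1)).ncard ≤ Fintype.card V := by
    have := Set.ncard_le_ncard (Set.subset_univ (Wn G c (Fintype.card V + 1))) (Set.toFinite _)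
    simpa [Set.ncard_univ] using this
  omega

/-- A stable index. -/
def Nst : ℕ := Nat.find (Wn_exists_stable G c)

/-- The full Player-1 region. -/
def Wst : Set V := Wn G c (Nst G c)

lemma Wst_stable : Wop G c (Wst G c) = Wst G c :=
  Nat.find_spec (Wn_exists_stable G c)

lemma Xset_Wst_empty : Xset G c (Wst G c) = ∅ := by
  rw [Set.eq_empty_iff_forall_notMem]
  intro v hv
  have h1 : v ∈ Wop G c (Wst G c) := Attr1.base (Set.mem_union_left _ hv)
  rw [Wst_stable] at h1
  exact hv.1 h1

lemma Wst_P1closed {v u : V} (hv : v ∉ Wst G c) (h1 : G.isP1 v) (he : G.E v u) :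
    u ∉ Wst G c := by
  intro hu
  apply hv
  have : v ∈ Wop G c (Wst G c) :=
    Attr1.p1 h1 he (Attr1.base (Set.mem_union_right _ hu))
  rwa [Wst_stable] at this

lemma Wst_P2exit (hsucc : ∀ v : V, ∃ u, G.E v u) {v : V} (hv : v ∉ Wst G c)
    (h1 : ¬ G.isP1 v) : ∃ u, G.E v u ∧ u ∉ Wst G c := by
  by_contra h
  push_neg at h
  apply hv
  have : v ∈ Wop G c (Wst G c) :=
    Attr1.p2 h1 (hsucc v) fun u hu => Attr1.base (Set.mem_union_right _ (h u hu))
  rwa [Wst_stable] at this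

/-! ### Attractor ranks and steps -/

def attrSet (T : Set V) : Set V := Attr1 G T

lemma attrSet_eq_iUnion (T : Set V) : attrSet G T = ⋃ n, attrStage G T n :=
  attr_eq_iUnion G T

lemma mem_attrSet {T : Set V} {v : V} : v ∈ attrSet G T ↔ Attr1 G T v := Iff.rfl

def arank (T : Set V) (v : V) : ℕ :=
  if h : ∃ m, v ∈ attrStage G T m then Nat.find h else 0

lemma arank_eq_find {T : Set V} {v : V} (hex : ∃ m, v ∈ attrStage G T m) :
    arank G T v = Nat.find hex := by
  unfold arank
  rw [dif_pos hex]

lemma exists_stage_of_mem {T : Set V} {v : V} (hv : v ∈ attrSet G T) :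
    ∃ m, v ∈ attrStage G T m := by
  rw [attrSet_eq_iUnion] at hv
  exact Set.mem_iUnion.mp hv

lemma arank_spec {T : Set V} {v : V} (hv : v ∈ attrSet G T) :
    v ∈ attrStage G T (arank G T v) := by
  have hex := exists_stage_of_mem G hv
  rw [arank_eq_find G hex]
  exact Nat.find_spec hex

lemma arank_le {T : Set V} {v : V} {m : ℕ} (h : v ∈ attrStage G T m) :
    arank G T v ≤ m := by
  have hex : ∃ m, v ∈ attrStage G T m := ⟨m, h⟩
  rw [arank_eq_find G hex]
  exact Nat.find_min' hex h

lemma stage_subset_attr {T : Set V} (m : ℕ) : attrStage G T m ⊆ attrSet G T := by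
  rw [attrSet_eq_iUnion]
  exact Set.subset_iUnion _ m

lemma arank_pos_structure {T : Set V} {v : V} (hv : v ∈ attrSet G T) (hvT : v ∉ T) :
    1 ≤ arank G T v ∧ v ∈ attrStage G T (arank G T v) ∧
      v ∉ attrStage G T (arank G T v - 1) := by
  have hex := exists_stage_of_mem G hv
  have h1 : v ∈ attrStage G T (arank G T v) := arank_spec G hv
  have hpos : 1 ≤ arank G T v := by
    rcases Nat.eq_zero_or_pos (arank G T v) with h | h
    · rw [h] at h1; exact absurd h1 hvT
    · exact h
  refine ⟨hpos, h1, ?_⟩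
  rw [arank_eq_find G hex] at hpos ⊢
  exact Nat.find_min hex (by omega)

lemma attr_p1_step {T : Set V} {v : V} (hv : v ∈ attrSet G T) (hvT : v ∉ T)
    (h1 : G.isP1 v) :
    ∃ u, G.E v u ∧ u ∈ attrSet G T ∧ arank G T u < arank G T v := by
  obtain ⟨hpos, hmem, hnot⟩ := arank_pos_structure G hv hvT
  rw [show arank G T v = (arank G T v - 1) + 1 by omega] at hmem
  rcases hmem with (hmem | ⟨-, u, he, hu⟩) | ⟨hnp, -, -⟩
  · exact absurd hmem hnot
  · exact ⟨u, he, stage_subset_attr G _ hu, lt_of_le_of_lt (arank_le G hu) (by omega)⟩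
  · exact absurd h1 hnp

lemma attr_p2_step {T : Set V} {v : V} (hv : v ∈ attrSet G T) (hvT : v ∉ T)
    (h1 : ¬ G.isP1 v) :
    ∀ u, G.E v u → u ∈ attrSet G T ∧ arank G T u < arank G T v := by
  obtain ⟨hpos, hmem, hnot⟩ := arank_pos_structure G hv hvT
  rw [show arank G T v = (arank G T v - 1) + 1 by omega] at hmem
  rcases hmem with (hmem | ⟨hp, -⟩) | ⟨-, -, hall⟩
  · exact absurd hmem hnot
  · exact absurd hp h1
  · intro u hu
    exact ⟨stage_subset_attr G _ (hall u hu),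
      lt_of_le_of_lt (arank_le G (hall u hu)) (by omega)⟩

/-! ### The combined memoryless strategy -/

/-- target set at level `n` -/
def Tn (n : ℕ) : Set V := Xset G c (Wn G c n) ∪ Wn G c n

lemma Wn_succ_eq (n : ℕ) : Wn G c (n + 1) = attrSet G (Tn G c n) := rfl

lemma gstar_exists (hsucc : ∀ v : V, ∃ u, G.E v u) (v : V) :
    ∃ u, G.E v u ∧
      (∀ n₀ : ℕ, v ∈ Wn G c (n₀ + 1) → v ∉ Wn G c n₀ → G.isP1 v →
        ((v ∈ Xset G c (Wn G c n₀) ∧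
            (u ∈ Wn G c n₀ ∨ (u ∈ Xset G c (Wn G c n₀) ∧
              phi G c (Wn G c n₀) u + (c - G.w v u) ≤ phi G c (Wn G c n₀) v))) ∨
         (v ∉ Xset G c (Wn G c n₀) ∧ u ∈ attrSet G (Tn G c n₀) ∧
            arank G (Tn G c n₀) u < arank G (Tn G c n₀) v))) := by
  by_cases h1 : G.isP1 v
  · by_cases hW : ∃ n, v ∈ Wn G c (n + 1) ∧ v ∉ Wn G c n
    · obtain ⟨N, hN1, hN2⟩ := hW
      have huniq : ∀ n₀, v ∈ Wn G c (n₀ + 1) → v ∉ Wn G c n₀ → n₀ = N := by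
        intro n₀ hm hnm
        by_contra hne
        rcases Nat.lt_or_ge n₀ N with h | h
        · exact hN2 (Wn_mono G c (by omega) hm)
        · exact hnm (Wn_mono G c (by omega : N + 1 ≤ n₀) hN1)
      by_cases hX : v ∈ Xset G c (Wn G c N)
      · obtain ⟨u, hu, hprop⟩ := Xset_p1_step G c hX h1
        refine ⟨u, hu, ?_⟩
        intro n₀ hm hnm _
        rw [huniq n₀ hm hnm]
        exact Or.inl ⟨hX, hprop⟩
      · have hvA : v ∈ attrSet G (Tn G c N) := (Wn_succ_eq G c N) ▸ hN1
        have hvT : v ∉ Tn G c N := by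
          intro hT
          rcases hT with hT | hT
          · exact hX hT
          · exact hN2 hT
        obtain ⟨u, hu, hA, hr⟩ := attr_p1_step G hvA hvT h1
        refine ⟨u, hu, ?_⟩
        intro n₀ hm hnm _
        rw [huniq n₀ hm hnm]
        exact Or.inr ⟨hX, hA, hr⟩
    · refine ⟨Classical.choose (hsucc v), Classical.choose_spec (hsucc v), ?_⟩
      intro n₀ hm hnm _
      exact absurd ⟨n₀, hm, hnm⟩ hW
  · exact ⟨Classical.choose (hsucc v), Classical.choose_spec (hsucc v),
      fun n₀ _ _ hp => absurd hp h1⟩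

def gstar (hsucc : ∀ v : V, ∃ u, G.E v u) : MLC G :=
  ⟨fun v => Classical.choose (gstar_exists G c hsucc v),
   fun v _ => (Classical.choose_spec (gstar_exists G c hsucc v)).1⟩

lemma gstar_spec (hsucc : ∀ v : V, ∃ u, G.E v u) (v : V) :
    ∀ n₀ : ℕ, v ∈ Wn G c (n₀ + 1) → v ∉ Wn G c n₀ → G.isP1 v →
      ((v ∈ Xset G c (Wn G c n₀) ∧
          ((gstar G c hsucc).1 v ∈ Wn G c n₀ ∨ ((gstar G c hsucc).1 v ∈ Xset G c (Wn G c n₀) ∧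
            phi G c (Wn G c n₀) ((gstar G c hsucc).1 v) + (c - G.w v ((gstar G c hsucc).1 v)) ≤
              phi G c (Wn G c n₀) v))) ∨
       (v ∉ Xset G c (Wn G c n₀) ∧ (gstar G c hsucc).1 v ∈ attrSet G (Tn G c n₀) ∧
          arank G (Tn G c n₀) ((gstar G c hsucc).1 v) < arank G (Tn G c n₀) v)) :=
  (Classical.choose_spec (gstar_exists G c hsucc v)).2

/-! ### Left case : Player 1 wins at least `c` memorylessly from `Wst` -/

theorem left_case (hsucc : ∀ v : V, ∃ u, G.E v u) (hcol : ∀ v, G.col v = 1 ∨ G.col v = 2) :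
    ∃ g : MLC G, ∀ q₀ ∈ Wst G c, ∀ ρ : ℕ → V, IsPlay G ρ → ρ 0 = q₀ →
      Consistent1 G (MLC.toStrat g) ρ → (c : EReal) ≤ payoff G ρ := by
  refine ⟨gstar G c hsucc, ?_⟩
  have key : ∀ n : ℕ, ∀ ρ : ℕ → V, IsPlay G ρ → Consistent1 G (MLC.toStrat (gstar G c hsucc)) ρ →
      ∀ T₀ : ℕ, ρ T₀ ∈ Wn G c n → (c : EReal) ≤ payoff G ρ := by
    intro n
    induction n with
    | zero =>
      intro ρ _ _ T₀ h
      exact absurd h (Set.notMem_empty _)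
    | succ n ih =>
      intro ρ hplay hcons T₀ hmem
      have hstep : ∀ t, G.isP1 (ρ t) → ρ (t + 1) = (gstar G c hsucc).1 (ρ t) := fun t ht => hcons t ht
      by_cases hexit : ∃ t, T₀ ≤ t ∧ ρ t ∈ Wn G c n
      · obtain ⟨t, -, ht⟩ := hexit
        exact ih ρ hplay hcons t ht
      push_neg at hexit
      -- REACH : from the attractor we reach `Xset (Wn n)`
      have reach : ∀ m : ℕ, ∀ t, T₀ ≤ t → ρ t ∈ attrSet G (Tn G c n) →
          arank G (Tn G c n) (ρ t) ≤ m →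
          ∃ t', t ≤ t' ∧ ρ t' ∈ Xset G c (Wn G c n) := by
        intro m
        induction m with
        | zero =>
          intro t hT ha hr
          have h0 : ρ t ∈ attrStage G (Tn G c n) 0 := by
            have := arank_spec G ha
            rwa [Nat.le_zero.mp hr] at this
          rcases h0 with hX | hW
          · exact ⟨t, le_refl _, hX⟩
          · exact absurd hW (hexit t hT)
        | succ m ihm =>
          intro t hT ha hr
          by_cases hTmem : ρ t ∈ Tn G c n
          · rcases hTmem with hX | hW
            · exact ⟨t, le_refl _, hX⟩
            · exact absurd hW (hexit t hT)
          · have hWn1 : ρ t ∈ Wn G c (n + 1) := (Wn_succ_eq G c n) ▸ ha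
            have hnX : ρ t ∉ Xset G c (Wn G c n) := fun hX => hTmem (Or.inl hX)
            by_cases h1 : G.isP1 (ρ t)
            · have hspec := gstar_spec G c hsucc (ρ t) n hWn1 (hexit t hT) h1
              rcases hspec with ⟨hX, -⟩ | ⟨-, hA, hlt⟩
              · exact absurd hX hnX
              · have hy : ρ (t + 1) = (gstar G c hsucc).1 (ρ t) := hstep t h1
                refine (ihm (t + 1) (by omega) (hy ▸ hA) ?_).imp
                  fun t' ht' => ⟨by omega, ht'.2⟩
                rw [hy]
                omega
            · obtain ⟨hA, hlt⟩ := attr_p2_step G ha hTmem h1 (ρ (t + 1)) (hplay t)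
              refine (ihm (t + 1) (by omega) hA ?_).imp fun t' ht' => ⟨by omega, ht'.2⟩
              omega
      obtain ⟨t₁, hT₀t₁, ht₁⟩ := reach (arank G (Tn G c n) (ρ T₀)) T₀ (le_refl _)
        ((Wn_succ_eq G c n) ▸ hmem) (le_refl _)
      -- X-phase invariant
      have INV : ∀ k : ℕ, ρ (t₁ + k) ∈ Xset G c (Wn G c n) ∧
          phi G c (Wn G c n) (ρ (t₁ + k)) + c * k ≤
            phi G c (Wn G c n) (ρ t₁) + (S G ρ (t₁ + k) - S G ρ t₁) := by
        intro k
        induction k with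
        | zero => simpa using ht₁
        | succ k ihk =>
          obtain ⟨hXk, hphik⟩ := ihk
          have hTle : T₀ ≤ t₁ + k := by omega
          have hstep2 : ρ (t₁ + k + 1) ∈ Wn G c n ∨
              (ρ (t₁ + k + 1) ∈ Xset G c (Wn G c n) ∧
                phi G c (Wn G c n) (ρ (t₁ + k + 1)) +
                  (c - G.w (ρ (t₁ + k)) (ρ (t₁ + k + 1))) ≤
                    phi G c (Wn G c n) (ρ (t₁ + k))) := by
            by_cases h1 : G.isP1 (ρ (t₁ + k))
            · have hWn1 : ρ (t₁ + k) ∈ Wn G c (n + 1) :=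
                Attr1.base (Set.mem_union_left _ hXk)
              have hspec := gstar_spec G c hsucc (ρ (t₁ + k)) n hWn1 (hexit _ hTle) h1
              rcases hspec with ⟨-, hprop⟩ | ⟨hnX, -⟩
              · rw [← hstep (t₁ + k) h1] at hprop
                exact hprop
              · exact absurd hXk hnX
            · exact Xset_p2_step G c hXk h1 _ (hplay (t₁ + k))
          rcases hstep2 with hW | ⟨hX', hineq⟩
          · exact absurd hW (hexit _ (by omega))
          · refine ⟨hX', ?_⟩
            have hSsucc : S G ρ (t₁ + k + 1) = S G ρ (t₁ + k) +
                G.w (ρ (t₁ + k)) (ρ (t₁ + k + 1)) := Finset.sum_range_succ _ _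
            push_cast
            push_cast at hphik
            rw [show t₁ + (k + 1) = t₁ + k + 1 by omega] at *
            rw [hSsucc]
            linarith
      -- conclude via the tail bound
      refine payoff_ge_of_tail G hcol (X := Xset G c (Wn G c n)) (T := t₁)
        (K := phi G c (Wn G c n) (ρ t₁))
        (fun v hv => Xset_col2 G c hcol hv) (fun t ht => ?_) (fun t ht => ?_)
      · have := (INV (t - t₁)).1
        rwa [show t₁ + (t - t₁) = t by omega] at this
      · obtain ⟨hX, hphi⟩ := INV (t - t₁)
        rw [show t₁ + (t - t₁) = t by omega] at hphi
        have hpos := phi_nonneg G c (Wn G c n) (ρ t)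
        have hcast : ((t - t₁ : ℕ) : ℝ) = (t : ℝ) - (t₁ : ℝ) := by
          push_cast [Nat.cast_sub ht]
          ring
        rw [hcast] at hphi
        linarith
  intro q₀ hq₀ ρ hplay h0 hcons
  exact key (Nst G c) ρ hplay hcons 0 (by rw [h0]; exact hq₀)

/-! ### Right case : Player 2 punishes any strategy from outside `Wst` -/

/-- Stages of `AttrC`. -/
def ACs (W : Set V) (B : ℝ) : ℕ → V → ℝ → Prop
  | 0 => fun v s => G.col v = 1 ∨ s ≤ -B
  | m + 1 => fun v s => ACs W B m v s ∨
      (v ∉ W ∧ ¬ G.isP1 v ∧ ∃ u, G.E v u ∧ u ∉ W ∧ ACs W B m u (s + (G.w v u - c))) ∨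
      (v ∉ W ∧ G.isP1 v ∧ ∀ u, G.E v u → ACs W B m u (s + (G.w v u - c)))

lemma ACs_mono {W : Set V} {B : ℝ} {m m' : ℕ} (h : m ≤ m') {v s}
    (hA : ACs G c W B m v s) : ACs G c W B m' v s := by
  induction m' with
  | zero => rwa [Nat.le_zero.mp h] at hA
  | succ m' ih =>
    rcases Nat.lt_or_ge m (m' + 1) with h' | h'
    · exact Or.inl (ih (by omega))
    · exact le_antisymm h h' ▸ hA

lemma attrC_iff_ACs {W : Set V} {B : ℝ} {v s} :
    AttrC G c W B v s ↔ ∃ m, ACs G c W B m v s := by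
  constructor
  · intro h
    induction h with
    | base h => exact ⟨0, h⟩
    | @p2 v u s hW h1 he huW _ ih =>
      obtain ⟨m, hm⟩ := ih
      exact ⟨m + 1, Or.inr (Or.inl ⟨hW, h1, u, he, huW, hm⟩)⟩
    | @p1 v s hW h1 hall ih =>
      classical
      set F : V → ℕ := fun u =>
        if h : ∃ m, ACs G c W B m u (s + (G.w v u - c)) then Nat.find h else 0 with hF
      set N : ℕ := Finset.univ.sup F with hN
      refine ⟨N + 1, Or.inr (Or.inr ⟨hW, h1, fun u hu => ?_⟩)⟩
      obtain ⟨m, hm⟩ := ih u hu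
      have hex : ∃ m, ACs G c W B m u (s + (G.w v u - c)) := ⟨m, hm⟩
      have h1' : ACs G c W B (F u) u (s + (G.w v u - c)) := by
        simp only [hF, dif_pos hex]
        exact Nat.find_spec hex
      exact ACs_mono G c (Finset.le_sup (Finset.mem_univ u)) h1'
  · rintro ⟨m, hm⟩
    induction m generalizing v s with
    | zero => exact AttrC.base hm
    | succ m ih =>
      rcases hm with hm | ⟨hW, h1, u, he, huW, hu⟩ | ⟨hW, h1, hall⟩
      · exact ih hm
      · exact AttrC.p2 hW h1 he huW (ih hu)
      · exact AttrC.p1 hW h1 fun u hu => ih (hall u hu)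

/-- every configuration outside `Wst` is in the Player-2 attractor (bottom case). -/
lemma attrC_everywhere {v : V} (hv : v ∉ Wst G c) (B s : ℝ) :
    AttrC G c (Wst G c) B v s := by
  by_contra h
  have h0 : ¬ AttrC G c (Wst G c) (B + s) v 0 := by
    intro h0
    exact h ((h0.translate G c (-s)).congr' G c (by ring) (by ring))
  have : v ∈ Xset G c (Wst G c) := ⟨hv, _, h0⟩
  rw [Xset_Wst_empty] at this
  exact this

def acrank (W : Set V) (B : ℝ) (v : V) (s : ℝ) : ℕ :=
  if h : ∃ m, ACs G c W B m v s then Nat.find h else 0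

lemma acrank_spec {W : Set V} {B : ℝ} {v s} (h : ∃ m, ACs G c W B m v s) :
    ACs G c W B (acrank G c W B v s) v s := by
  unfold acrank
  rw [dif_pos h]
  exact Nat.find_spec h

lemma acrank_min {W : Set V} {B : ℝ} {v s} {m : ℕ} (h : ACs G c W B m v s) :
    acrank G c W B v s ≤ m := by
  have hex : ∃ m, ACs G c W B m v s := ⟨m, h⟩
  unfold acrank
  rw [dif_pos hex]
  exact Nat.find_min' hex h

/-- bad configurations -/
def Bad (v : V) (s : ℝ) : Prop := G.col v = 1 ∨ s ≤ -(1:ℝ)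

lemma acrank_pos {v : V} {s : ℝ} (hv : v ∉ Wst G c) (hnb : ¬ Bad G v s) :
    1 ≤ acrank G c (Wst G c) 1 v s ∧
      ACs G c (Wst G c) 1 (acrank G c (Wst G c) 1 v s) v s ∧
      ¬ ACs G c (Wst G c) 1 (acrank G c (Wst G c) 1 v s - 1) v s := by
  have hA : AttrC G c (Wst G c) 1 v s := attrC_everywhere G c hv 1 s
  have hex : ∃ m, ACs G c (Wst G c) 1 m v s := (attrC_iff_ACs G c).mp hA
  have hspec := acrank_spec G c hex
  have hpos : 1 ≤ acrank G c (Wst G c) 1 v s := by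
    rcases Nat.eq_zero_or_pos (acrank G c (Wst G c) 1 v s) with h | h
    · rw [h] at hspec
      exact absurd hspec hnb
    · exact h
  refine ⟨hpos, hspec, ?_⟩
  unfold acrank at hpos ⊢
  rw [dif_pos hex] at hpos ⊢
  exact Nat.find_min hex (by omega)

/-- rank decrease for Player-1 moves (any edge). -/
lemma p1_rank_step {v : V} {s : ℝ} (hv : v ∉ Wst G c) (h1 : G.isP1 v)
    (hnb : ¬ Bad G v s) {u : V} (he : G.E v u) :
    ACs G c (Wst G c) 1 (acrank G c (Wst G c) 1 v s - 1) u (s + (G.w v u - c)) := by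
  obtain ⟨hpos, hspec, hmin⟩ := acrank_pos G c hv hnb
  rw [show acrank G c (Wst G c) 1 v s = (acrank G c (Wst G c) 1 v s - 1) + 1 by omega]
    at hspec
  rcases hspec with hm | ⟨-, hp2, -⟩ | ⟨-, -, hall⟩
  · exact absurd hm hmin
  · exact absurd h1 hp2
  · exact hall u he

/-- the Player-2 move choice. -/
lemma p2move_exists (hsucc : ∀ v : V, ∃ u, G.E v u) (v : V) (s : ℝ) :
    ∃ u, G.E v u ∧ (v ∉ Wst G c → ¬ G.isP1 v →
      (u ∉ Wst G c ∧ (¬ Bad G v s →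
        ACs G c (Wst G c) 1 (acrank G c (Wst G c) 1 v s - 1) u (s + (G.w v u - c))))) := by
  by_cases hv : v ∉ Wst G c
  · by_cases h1 : G.isP1 v
    · exact ⟨Classical.choose (hsucc v), Classical.choose_spec (hsucc v),
        fun _ hn => absurd h1 hn⟩
    · by_cases hnb : Bad G v s
      · obtain ⟨u, he, hu⟩ := Wst_P2exit G c hsucc hv h1
        exact ⟨u, he, fun _ _ => ⟨hu, fun h => absurd hnb h⟩⟩
      · obtain ⟨hpos, hspec, hmin⟩ := acrank_pos G c hv hnb
        rw [show acrank G c (Wst G c) 1 v s = (acrank G c (Wst G c) 1 v s - 1) + 1 by omega]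
          at hspec
        rcases hspec with hm | ⟨-, -, u, he, huW, hu⟩ | ⟨-, hp1, -⟩
        · exact absurd hm hmin
        · exact ⟨u, he, fun _ _ => ⟨huW, fun _ => hu⟩⟩
        · exact absurd hp1 h1
  · exact ⟨Classical.choose (hsucc v), Classical.choose_spec (hsucc v),
      fun hn => absurd hn (by simpa using hv)⟩

def pick2 (hsucc : ∀ v : V, ∃ u, G.E v u) (v : V) (s : ℝ) : V :=
  Classical.choose (p2move_exists G c hsucc v s)

lemma pick2_spec (hsucc : ∀ v : V, ∃ u, G.E v u) (v : V) (s : ℝ) :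
    G.E v (pick2 G c hsucc v s) ∧ (v ∉ Wst G c → ¬ G.isP1 v →
      ((pick2 G c hsucc v s) ∉ Wst G c ∧ (¬ Bad G v s →
        ACs G c (Wst G c) 1 (acrank G c (Wst G c) 1 v s - 1) (pick2 G c hsucc v s)
          (s + (G.w v (pick2 G c hsucc v s) - c))))) :=
  Classical.choose_spec (p2move_exists G c hsucc v s)

/-- The punishing play, as a trajectory `(history, current state, relative sum)`. -/
def traj (hsucc : ∀ v : V, ∃ u, G.E v u) (σ : Strat1 G) (q₀ : V) : ℕ → List V × V × ℝ
  | 0 => ([], q₀, 0)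
  | t + 1 =>
    let p := traj hsucc σ q₀ t
    let v := p.2.1
    let s := p.2.2
    let u := if G.isP1 v then σ.f p.1 v else pick2 G c hsucc v s
    (p.1 ++ [v], u, (if Bad G v s then 0 else s) + (G.w v u - c))



theorem right_case (hsucc : ∀ v : V, ∃ u, G.E v u) (hcol : ∀ v, G.col v = 1 ∨ G.col v = 2)
    {q₀ : V} (hq : q₀ ∉ Wst G c) (σ : Strat1 G) :
    ∃ ρ : ℕ → V, IsPlay G ρ ∧ ρ 0 = q₀ ∧ Consistent1 G σ ρ ∧ payoff G ρ ≤ (c : EReal) := by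
  set ρ : ℕ → V := fun t => (traj G c hsucc σ q₀ t).2.1 with hρ
  set sq : ℕ → ℝ := fun t => (traj G c hsucc σ q₀ t).2.2 with hsq
  set hi : ℕ → List V := fun t => (traj G c hsucc σ q₀ t).1 with hhi
  have estate : ∀ t, ρ (t + 1) =
      (if G.isP1 (ρ t) then σ.f (hi t) (ρ t) else pick2 G c hsucc (ρ t) (sq t)) :=
    fun t => rfl
  have esq : ∀ t, sq (t + 1) =
      (if Bad G (ρ t) (sq t) then 0 else sq t) + (G.w (ρ t) (ρ (t + 1)) - c) :=
    fun t => rfl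
  have ehist : ∀ t, hi (t + 1) = hi t ++ [ρ t] := fun t => rfl
  have hofn : ∀ t, hi t = List.ofFn (fun i : Fin t => ρ i) := by
    intro t
    induction t with
    | zero => rfl
    | succ t ih =>
      rw [ehist t, ih, List.ofFn_succ', List.concat_eq_append]
      simp
  have hplay : IsPlay G ρ := by
    intro t
    rw [estate t]
    by_cases h1 : G.isP1 (ρ t)
    · rw [if_pos h1]
      exact σ.valid _ _ h1
    · rw [if_neg h1]
      exact (pick2_spec G c hsucc (ρ t) (sq t)).1
  have hcons : Consistent1 G σ ρ := by
    intro t h1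
    rw [estate t, if_pos h1, hofn t]
  have hnotW : ∀ t, ρ t ∉ Wst G c := by
    intro t
    induction t with
    | zero => exact hq
    | succ t ih =>
      by_cases h1 : G.isP1 (ρ t)
      · exact Wst_P1closed G c ih h1 (hplay t)
      · rw [estate t, if_neg h1]
        exact ((pick2_spec G c hsucc (ρ t) (sq t)).2 ih h1).1
  -- rank decrease
  have hdec : ∀ t, ¬ Bad G (ρ t) (sq t) →
      acrank G c (Wst G c) 1 (ρ (t + 1)) (sq (t + 1)) <
        acrank G c (Wst G c) 1 (ρ t) (sq t) := by
    intro t hnb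
    have hs1 : sq (t + 1) = sq t + (G.w (ρ t) (ρ (t + 1)) - c) := by
      rw [esq t, if_neg hnb]
    have hmem : ACs G c (Wst G c) 1 (acrank G c (Wst G c) 1 (ρ t) (sq t) - 1)
        (ρ (t + 1)) (sq (t + 1)) := by
      rw [hs1]
      by_cases h1 : G.isP1 (ρ t)
      · exact p1_rank_step G c (hnotW t) h1 hnb (hplay t)
      · have := ((pick2_spec G c hsucc (ρ t) (sq t)).2 (hnotW t) h1).2 hnb
        rw [estate t, if_neg h1]
        exact this
    have h2 := acrank_min G c hmem
    have h3 := (acrank_pos G c (hnotW t) hnb).1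
    omega
  -- progress towards bad configurations, with minimal witnesses
  have hprog : ∀ r t, acrank G c (Wst G c) 1 (ρ t) (sq t) ≤ r →
      ∃ t', t ≤ t' ∧ Bad G (ρ t') (sq t') := by
    intro r
    induction r with
    | zero =>
      intro t hr
      by_cases hb : Bad G (ρ t) (sq t)
      · exact ⟨t, le_refl _, hb⟩
      · have := hdec t hb
        omega
    | succ r ih =>
      intro t hr
      by_cases hb : Bad G (ρ t) (sq t)
      · exact ⟨t, le_refl _, hb⟩
      · obtain ⟨t', h1, h2⟩ := ih (t + 1) (by have := hdec t hb; omega)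
        exact ⟨t', by omega, h2⟩
  have hprog2 : ∀ t, ∃ t', (t ≤ t' ∧ Bad G (ρ t') (sq t')) ∧
      ∀ j, t ≤ j → j < t' → ¬ Bad G (ρ j) (sq j) := by
    intro t
    have hex := hprog (acrank G c (Wst G c) 1 (ρ t) (sq t)) t (le_refl _)
    have hex' : ∃ t', t ≤ t' ∧ Bad G (ρ t') (sq t') := hex
    refine ⟨Nat.find hex', Nat.find_spec hex', fun j hj1 hj2 hbad => ?_⟩
    exact Nat.find_min hex' hj2 ⟨hj1, hbad⟩
  choose nb hnb1 hnb2 using hprog2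
  -- chain of consecutive bad times
  set β : ℕ → ℕ := fun k => Nat.rec (nb 0) (fun _ b => nb (b + 1)) k with hβ
  have hβ0 : β 0 = nb 0 := rfl
  have hβs : ∀ k, β (k + 1) = nb (β k + 1) := fun k => rfl
  have hβbad : ∀ k, Bad G (ρ (β k)) (sq (β k)) := by
    intro k
    cases k with
    | zero => exact (hnb1 0).2
    | succ k => exact (hnb1 (β k + 1)).2
  have hβlt : ∀ k, β k < β (k + 1) := by
    intro k
    have := (hnb1 (β k + 1)).1
    rw [hβs]
    omega
  have hβnone : ∀ k j, β k < j → j < β (k + 1) → ¬ Bad G (ρ j) (sq j) := by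
    intro k j h1 h2
    exact hnb2 (β k + 1) j (by omega) (by rw [hβs] at h2; omega)
  have hβge : ∀ k, k ≤ β k := by
    intro k
    induction k with
    | zero => omega
    | succ k ih => have := hβlt k; omega
  -- accumulated sums
  set A : ℕ → ℝ := fun t => S G ρ t - c * t with hA
  have hAstep : ∀ t, A (t + 1) = A t + (G.w (ρ t) (ρ (t + 1)) - c) := by
    intro t
    simp only [hA, S, Finset.sum_range_succ]
    push_cast
    ring
  have hDstep : ∀ t, ¬ Bad G (ρ t) (sq t) → sq (t + 1) - A (t + 1) = sq t - A t := by
    intro t hnb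
    rw [esq t, if_neg hnb, hAstep t]
    ring
  have hDbad : ∀ t, Bad G (ρ t) (sq t) → sq (t + 1) - A (t + 1) = -A t := by
    intro t hb
    rw [esq t, if_pos hb, hAstep t]
    ring
  -- relative sums over segments
  have hseg : ∀ k, sq (β (k + 1)) = A (β (k + 1)) - A (β k) := by
    intro k
    have key : ∀ d, β k + 1 + d ≤ β (k + 1) →
        sq (β k + 1 + d) - A (β k + 1 + d) = -A (β k) := by
      intro d
      induction d with
      | zero =>
        intro _
        simpa using hDbad (β k) (hβbad k)
      | succ d ih =>
        intro hle
        have hnb : ¬ Bad G (ρ (β k + 1 + d)) (sq (β k + 1 + d)) :=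
          hβnone k (β k + 1 + d) (by omega) (by omega)
        have := hDstep (β k + 1 + d) hnb
        rw [show β k + 1 + (d + 1) = β k + 1 + d + 1 by omega, this]
        exact ih (by omega)
    have hlt := hβlt k
    have := key (β (k + 1) - (β k + 1)) (by omega)
    rw [show β k + 1 + (β (k + 1) - (β k + 1)) = β (k + 1) by omega] at this
    linarith
  -- main case split
  by_cases hinf : {t | G.col (ρ t) = 1}.Infinite
  · obtain ⟨v, hv1, hv2⟩ := exists_infOcc_of_infinite (P := fun v => G.col v = 1) hinf
    refine ⟨ρ, hplay, rfl, hcons, ?_⟩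
    rw [payoff_eq_bot G (not_parityWin G hcol hv2 hv1)]
    exact bot_le
  · -- only finitely many priority-1 visits : the sums drift to `-∞`
    rw [Set.not_infinite] at hinf
    obtain ⟨T₀, hT₀⟩ := hinf.bddAbove
    have hcol2 : ∀ t, T₀ < t → G.col (ρ t) ≠ 1 := by
      intro t ht hc
      exact absurd (hT₀ hc) (by omega)
    have hdip : ∀ k, T₀ < β k → A (β (k + 1)) ≤ A (β k) - 1 := by
      intro k hk
      have hb := hβbad (k + 1)
      have hcol' : G.col (ρ (β (k + 1))) ≠ 1 := hcol2 _ (by have := hβlt k; omega)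
      rcases hb with hb | hb
      · exact absurd hb hcol'
      · have := hseg k
        linarith
    -- from some index on, `A ∘ β` decreases by at least 1 each step
    set K₀ : ℕ := T₀ + 1 with hK₀
    have hβK₀ : ∀ j, T₀ < β (K₀ + j) := by
      intro j
      have := hβge (K₀ + j)
      omega
    have hAdesc : ∀ j, A (β (K₀ + j)) ≤ A (β K₀) - j := by
      intro j
      induction j with
      | zero => simp
      | succ j ih =>
        have := hdip (K₀ + j) (hβK₀ j)
        rw [show K₀ + (j + 1) = (K₀ + j) + 1 by omega]
        push_cast
        push_cast at ih
        linarith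
    refine ⟨ρ, hplay, rfl, hcons, ?_⟩
    apply payoff_le_of_freq
    intro N
    obtain ⟨j₀, hj₀⟩ := exists_nat_ge (A (β K₀))
    set j : ℕ := max (N + 1) j₀ with hj
    refine ⟨β (K₀ + j), ?_, ?_, ?_⟩
    · have := hβge (K₀ + j)
      omega
    · have := hβge (K₀ + j)
      omega
    · have h1 := hAdesc j
      have h2 : A (β (K₀ + j)) ≤ 0 := by
        have : (j₀ : ℝ) ≤ (j : ℝ) := by exact_mod_cast le_max_right (N + 1) j₀
        linarith
      simp only [hA] at h2
      linarith

end Core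

/-! ### Final assembly -/

theorem main {V : Type} [Fintype V] (G : Game V)
    (hsucc : ∀ v, ∃ u, G.E v u)
    (hcol : ∀ v, G.col v = 1 ∨ G.col v = 2) (q₀ : V) :
    ∃ σ : Strat1 G, Memoryless1 σ ∧ val1 G σ q₀ = lowVal G q₀ := by
  have : Nonempty (MLC G) := MLC.nonempty G hsucc
  obtain ⟨gmax, hgmax⟩ := Finite.exists_max (fun g : MLC G => val1 G (MLC.toStrat g) q₀)
  refine ⟨MLC.toStrat gmax, MLC.memoryless gmax, le_antisymm (le_iSup (fun σ : Strat1 G => val1 G σ q₀) _) ?_⟩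
  -- it remains to prove `lowVal G q₀ ≤ val1 G (MLC.toStrat gmax) q₀`
  by_contra hlt
  push_neg at hlt
  set M := val1 G (MLC.toStrat gmax) q₀ with hM
  -- pick a real `c` strictly in between
  obtain ⟨c, hMc, hclow⟩ : ∃ c : ℝ, M < (c : EReal) ∧ (c : EReal) < lowVal G q₀ :=
    EReal.exists_between_coe_real hlt
  by_cases hq : q₀ ∈ Wst G c
  · -- Player 1 has a memoryless strategy with value ≥ c > M : contradiction
    obtain ⟨g, hg⟩ := left_case G c hsucc hcol
    have : (c : EReal) ≤ val1 G (MLC.toStrat g) q₀ :=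
      val1_ge fun ρ h1 h2 h3 => hg q₀ hq ρ h1 h2 h3
    exact absurd (this.trans (hgmax g)) (not_le.mpr hMc)
  · -- Player 2 punishes every strategy : contradiction with `c < lowVal`
    obtain ⟨σ, hσ⟩ : ∃ σ : Strat1 G, (c : EReal) < val1 G σ q₀ := by
      by_contra h
      push_neg at h
      exact absurd (iSup_le h : lowVal G q₀ ≤ (c : EReal)) (not_le.mpr hclow)
    obtain ⟨ρ, h1, h2, h3, h4⟩ := right_case G c hsucc hcol hq σ
    exact absurd ((val1_le h1 h2 h3).trans h4) (not_le.mpr hσ)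

end
end MPCB
/-- in a mean-payoff co-Büchi game (priorities in {1,2}),
Player 1 has a memoryless optimal strategy from every state. -/
theorem coBuchi_memoryless_optimal {V : Type} [Fintype V] (G : Game V)
    (hsucc : ∀ v, ∃ u, G.E v u)
    (hcol : ∀ v, G.col v = 1 ∨ G.col v = 2) (q₀ : V) :
    ∃ σ : Strat1 G, Memoryless1 σ ∧ val1 G σ q₀ = lowVal G q₀ := MPCB.main G hsucc hcol q₀
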